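/- Let λ ∈ ℝ, M, N ∈ ℕ and K, R, L ∈ {0,1} be fixed. Then there exists a constant C (depending only on λ, M, N, K, R, L) such that for all t ∈ (0,1], θ, φ ∈ [0,π] and u, v ∈ [-1,1]: |∂_u^K ∂_v^R ∂_φ^L ∂_θ^N ∂_t^M Ψ^λ(t,θ,φ,u,v)| ≤ C Σ_{k=0}^{2} Σ_{r=0}^{2} (sin(θ/2)+sin(φ/2))^{Kk} (cos(θ/2)+cos(φ/2))^{Rr} (t² + q(θ,φ,u,v))^{-(λ + (L+N+M−1+Kk+Rr)/2)}. -/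

import Mathlib

open MeasureTheory Real Set
open scoped ENNReal Classical

noncomputable def cab (α β : ℝ) : ℝ :=
  Real.Gamma (α + β + 2) / (2 ^ (α + β + 1) * Real.Gamma (α + 1) * Real.Gamma (β + 1))

noncomputable def F4 (a₁ a₂ b₁ b₂ x y : ℝ) : ℝ :=
  ∑' p : ℕ × ℕ,
    (Polynomial.eval a₁ (ascPochhammer ℝ (p.1 + p.2)) *
      Polynomial.eval a₂ (ascPochhammer ℝ (p.1 + p.2))) /
    (Polynomial.eval b₁ (ascPochhammer ℝ p.1) * Polynomial.eval b₂ (ascPochhammer ℝ p.2) *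
      (Nat.factorial p.1) * (Nat.factorial p.2)) * x ^ p.1 * y ^ p.2

noncomputable def Hker (α β t θ φ : ℝ) : ℝ :=
  cab α β * Real.sinh (t / 2) / Real.cosh (t / 2) ^ (α + β + 2) *
    F4 ((α + β + 2) / 2) ((α + β + 3) / 2) (α + 1) (β + 1)
      ((Real.sin (θ / 2) * Real.sin (φ / 2) / Real.cosh (t / 2)) ^ 2)
      ((Real.cos (θ / 2) * Real.cos (φ / 2) / Real.cosh (t / 2)) ^ 2)

noncomputable def qf (θ φ u v : ℝ) : ℝ :=
  1 - u * Real.sin (θ / 2) * Real.sin (φ / 2) - v * Real.cos (θ / 2) * Real.cos (φ / 2)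

noncomputable def Psi (α β t θ φ u v : ℝ) : ℝ :=
  cab α β * Real.sinh (t / 2) / (Real.cosh (t / 2) - 1 + qf θ φ u v) ^ (α + β + 2)

noncomputable def PsiE (α β t θ φ u v : ℝ) : ℝ :=
  (Psi α β t θ φ u v + Psi α β t θ φ (-u) v + Psi α β t θ φ u (-v) +
    Psi α β t θ φ (-u) (-v)) / 4

noncomputable def PiMeas (ν : ℝ) : Measure ℝ :=
  if ν = -(1/2) then (2⁻¹ : ℝ≥0∞) • (Measure.dirac (-1) + Measure.dirac 1)
  else (volume.restrict (Icc (-1 : ℝ) 1)).withDensity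
    (fun u => ENNReal.ofReal
      (Real.Gamma (ν + 1) / (Real.sqrt π * Real.Gamma (ν + 1/2)) * (1 - u ^ 2) ^ (ν - 1/2)))

noncomputable def PiFun (γ u : ℝ) : ℝ :=
  Real.Gamma (γ + 1) / (Real.sqrt π * Real.Gamma (γ + 1/2)) *
    ∫ w in (0 : ℝ)..u, (1 - w ^ 2) ^ (γ - 1/2)

noncomputable def PiInt (ν : ℝ) (S : Set ℝ) (f : ℝ → ℝ) : ℝ :=
  if ν = -(1/2) then
    ((if (-1 : ℝ) ∈ S then f (-1) else 0) + (if (1 : ℝ) ∈ S then f 1 else 0)) / 2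
  else ∫ u in S, f u *
    (Real.Gamma (ν + 1) / (Real.sqrt π * Real.Gamma (ν + 1/2)) * (1 - u ^ 2) ^ (ν - 1/2))

noncomputable def muab (α β : ℝ) : Measure ℝ :=
  (volume.restrict (Icc (0 : ℝ) π)).withDensity
    (fun θ => ENNReal.ofReal (Real.sin (θ / 2) ^ (2 * α + 1) * Real.cos (θ / 2) ^ (2 * β + 1)))

def ballI (θ r : ℝ) : Set ℝ := Ioo (θ - r) (θ + r) ∩ Icc 0 π

noncomputable def Psil (l t θ φ u v : ℝ) : ℝ :=
  Real.sinh (t / 2) / (Real.cosh (t / 2) - 1 + qf θ φ u v) ^ l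

/-- The mixed partial derivative `∂_u^K ∂_v^R ∂_φ^L ∂_θ^N ∂_t^M Ψ^λ`. -/
noncomputable def PsilD (l : ℝ) (K R L N M : ℕ) (t θ φ u v : ℝ) : ℝ :=
  iteratedDeriv K (fun u' =>
    iteratedDeriv R (fun v' =>
      iteratedDeriv L (fun φ' =>
        iteratedDeriv N (fun θ' =>
          iteratedDeriv M (fun t' => Psil l t' θ' φ' u' v') t) θ) φ) v) u

namespace PsiAux

lemma sinh_le_two_mul {y : ℝ} (h0 : 0 ≤ y) (h1 : y ≤ 1/2) : Real.sinh y ≤ 2 * y := by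
  have h2 : 1 - y ≤ Real.exp (-y) := by nlinarith [Real.add_one_le_exp (-y)]
  have h3 : Real.exp y = (Real.exp (-y))⁻¹ := by rw [← Real.exp_neg]; ring_nf
  have h4 : 0 < Real.exp (-y) := Real.exp_pos _
  rw [Real.sinh_eq, h3, div_le_iff₀ (by norm_num)]
  have h5 : (Real.exp (-y))⁻¹ ≤ (1 - y)⁻¹ := inv_anti₀ (by linarith) h2
  have h6 : (1 - y)⁻¹ ≤ 1 + 2*y := by
    rw [inv_le_iff_one_le_mul₀ (by linarith)]; nlinarith
  nlinarith
lemma self_le_sinh' {y : ℝ} (h0 : 0 ≤ y) : y ≤ Real.sinh y := by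
  rcases eq_or_lt_of_le h0 with h|h
  · simp [← h]
  · exact (Real.self_lt_sinh_iff.2 h).le
lemma cosh_sub_one_eq (x : ℝ) : Real.cosh x - 1 = 2 * Real.sinh (x/2) ^ 2 := by
  have h2 : Real.cosh x = 2 * Real.cosh (x/2)^2 - 1 := by
    have := Real.cosh_two_mul (x/2)
    rw [show 2 * (x/2) = x by ring] at this
    linarith [this, Real.cosh_sq (x/2)]
  nlinarith [Real.cosh_sq (x/2)]
lemma cosh_le_two {t : ℝ} (h0 : 0 ≤ t) (h1 : t ≤ 1) : Real.cosh (t/2) ≤ 2 := by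
  have h2 : 1 - t/2 ≤ Real.exp (-(t/2)) := by nlinarith [Real.add_one_le_exp (-(t/2))]
  have h3 : Real.exp (t/2) = (Real.exp (-(t/2)))⁻¹ := by rw [← Real.exp_neg]; ring_nf
  have h4 : Real.exp (-(t/2)) ≤ 1 := by rw [Real.exp_le_one_iff]; linarith
  rw [Real.cosh_eq, h3]
  have h5 : (Real.exp (-(t/2)))⁻¹ ≤ (1 - t/2)⁻¹ := inv_anti₀ (by linarith) h2
  have h6 : (1 - t/2)⁻¹ ≤ 2 := by rw [inv_le_iff_one_le_mul₀ (by linarith)]; linarith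
  linarith
-- cosh(t/2) - 1 bounds for t ∈ (0,1]
lemma cosh_half_sub_one_le {t : ℝ} (h0 : 0 ≤ t) (h1 : t ≤ 1) :
    Real.cosh (t/2) - 1 ≤ t^2 := by
  rw [cosh_sub_one_eq]
  have h2 : Real.sinh (t/2/2) ≤ 2 * (t/2/2) := sinh_le_two_mul (by linarith) (by linarith)
  have h3 : 0 ≤ Real.sinh (t/2/2) := by
    have := self_le_sinh' (y := t/2/2) (by linarith)
    linarith
  nlinarith
lemma le_cosh_half_sub_one {t : ℝ} (h0 : 0 ≤ t) : t^2/32 ≤ Real.cosh (t/2) - 1 := by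
  rw [cosh_sub_one_eq]
  have h2 : t/4 ≤ Real.sinh (t/2/2) := by
    have := self_le_sinh' (y := t/4) (by linarith)
    rw [show t/2/2 = t/4 by ring]; exact this
  nlinarith


abbrev Pt := Fin 5 → ℝ
inductive Atm | s | ch | sθ | cθ | sφ | cφ | uu | vv | fθ | fφ | g | em | msθ | mcθ | msφ | mcφ
  deriving DecidableEq
noncomputable def Atm.eval : Atm → Pt → ℝ
  | .s, p => Real.sinh (p 0 / 2)
  | .ch, p => Real.cosh (p 0 / 2)
  | .sθ, p => Real.sin (p 1 / 2)
  | .cθ, p => Real.cos (p 1 / 2)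
  | .sφ, p => Real.sin (p 2 / 2)
  | .cφ, p => Real.cos (p 2 / 2)
  | .uu, p => p 3
  | .vv, p => p 4
  | .fθ, p => (p 4 * Real.sin (p 1/2) * Real.cos (p 2/2) - p 3 * Real.cos (p 1/2) * Real.sin (p 2/2))/2
  | .fφ, p => (p 4 * Real.cos (p 1/2) * Real.sin (p 2/2) - p 3 * Real.sin (p 1/2) * Real.cos (p 2/2))/2
  | .g, p => -(p 3 * Real.cos (p 1/2) * Real.cos (p 2/2) + p 4 * Real.sin (p 1/2) * Real.sin (p 2/2))/4
  | .em, p => p 3 * Real.sin (p 1/2) * Real.sin (p 2/2) + p 4 * Real.cos (p 1/2) * Real.cos (p 2/2)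
  | .msθ, p => Real.sin (p 1 / 2)
  | .mcθ, p => Real.cos (p 1 / 2)
  | .msφ, p => Real.sin (p 2 / 2)
  | .mcφ, p => Real.cos (p 2 / 2)
noncomputable def dA : Fin 5 → Atm → List (ℝ × List Atm)
  | 0, .s => [(1/2, [.ch])]
  | 0, .ch => [(1/2, [.s])]
  | 1, .sθ => [(1/2, [.cθ])]
  | 1, .msθ => [(1/2, [.cθ])]
  | 1, .cθ => [(-(1/2), [.sθ])]
  | 1, .mcθ => [(-(1/2), [.sθ])]
  | 1, .fθ => [(1/4, [.em])]
  | 1, .fφ => [(1, [.g])]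
  | 1, .g => [(-(1/4), [.fφ])]
  | 1, .em => [(-1, [.fθ])]
  | 2, .sφ => [(1/2, [.cφ])]
  | 2, .msφ => [(1/2, [.cφ])]
  | 2, .cφ => [(-(1/2), [.sφ])]
  | 2, .mcφ => [(-(1/2), [.sφ])]
  | 2, .fθ => [(1, [.g])]
  | 2, .fφ => [(1/4, [.em])]
  | 2, .g => [(-(1/4), [.fθ])]
  | 2, .em => [(-1, [.fφ])]
  | 3, .uu => [(1, [])]
  | 3, .fθ => [(-(1/2), [.cθ, .msφ])]
  | 3, .fφ => [(-(1/2), [.msθ, .cφ])]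
  | 3, .g => [(-(1/4), [.cθ, .cφ])]
  | 3, .em => [(1, [.sθ, .sφ])]
  | 4, .vv => [(1, [])]
  | 4, .fθ => [(1/2, [.sθ, .mcφ])]
  | 4, .fφ => [(1/2, [.mcθ, .sφ])]
  | 4, .g => [(-(1/4), [.sθ, .sφ])]
  | 4, .em => [(1, [.cθ, .cφ])]
  | _, _ => []
noncomputable def Qd : Fin 5 → List (ℝ × List Atm)
  | 0 => [(1/2, [.s])]
  | 1 => [(1, [.fθ])]
  | 2 => [(1, [.fφ])]
  | 3 => [(-1, [.msθ, .msφ])]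
  | 4 => [(-1, [.mcθ, .mcφ])]
noncomputable def prodA (L : List Atm) (p : Pt) : ℝ := (L.map (Atm.eval · p)).prod
noncomputable def evalL (T : List (ℝ × List Atm)) (p : Pt) : ℝ :=
  (T.map (fun cl => cl.1 * prodA cl.2 p)).sum


private lemma hds (x : ℝ) : HasDerivAt (fun y : ℝ => Real.sin (y/2)) (Real.cos (x/2) * (1/2)) x :=
  ((hasDerivAt_id x).div_const 2).sin
private lemma hdc (x : ℝ) : HasDerivAt (fun y : ℝ => Real.cos (y/2)) (-Real.sin (x/2) * (1/2)) x :=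
  ((hasDerivAt_id x).div_const 2).cos
private lemma hdsh (x : ℝ) : HasDerivAt (fun y : ℝ => Real.sinh (y/2)) (Real.cosh (x/2) * (1/2)) x :=
  ((hasDerivAt_id x).div_const 2).sinh
private lemma hdch (x : ℝ) : HasDerivAt (fun y : ℝ => Real.cosh (y/2)) (Real.sinh (x/2) * (1/2)) x :=
  ((hasDerivAt_id x).div_const 2).cosh

set_option maxHeartbeats 1000000 in
lemma atom_hasDeriv0 (a : Atm) (p : Pt) :
    HasDerivAt (fun y => Atm.eval a (Function.update p 0 y)) (evalL (dA 0 a) p) (p 0) := by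
  cases a <;>
    simp only [Atm.eval, Function.update_apply, Fin.reduceEq, reduceIte, if_true, if_pos rfl,
      evalL, dA, prodA, List.map_cons, List.map_nil, List.prod_cons, List.prod_nil,
      List.sum_cons, List.sum_nil, add_zero, mul_one]
  case s =>
    convert hdsh (p 0) using 1
    ring
  case ch =>
    convert hdch (p 0) using 1
    ring
  case sθ => exact hasDerivAt_const _ _
  case cθ => exact hasDerivAt_const _ _
  case sφ => exact hasDerivAt_const _ _
  case cφ => exact hasDerivAt_const _ _
  case uu => exact hasDerivAt_const _ _
  case vv => exact hasDerivAt_const _ _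
  case fθ => exact hasDerivAt_const _ _
  case fφ => exact hasDerivAt_const _ _
  case g => exact hasDerivAt_const _ _
  case em => exact hasDerivAt_const _ _
  case msθ => exact hasDerivAt_const _ _
  case mcθ => exact hasDerivAt_const _ _
  case msφ => exact hasDerivAt_const _ _
  case mcφ => exact hasDerivAt_const _ _

set_option maxHeartbeats 1000000 in
lemma atom_hasDeriv1 (a : Atm) (p : Pt) :
    HasDerivAt (fun y => Atm.eval a (Function.update p 1 y)) (evalL (dA 1 a) p) (p 1) := by
  cases a <;>
    simp only [Atm.eval, Function.update_apply, Fin.reduceEq, reduceIte, if_true, if_pos rfl,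
      evalL, dA, prodA, List.map_cons, List.map_nil, List.prod_cons, List.prod_nil,
      List.sum_cons, List.sum_nil, add_zero, mul_one]
  case s => exact hasDerivAt_const _ _
  case ch => exact hasDerivAt_const _ _
  case sθ =>
    convert hds (p 1) using 1
    ring
  case cθ =>
    convert hdc (p 1) using 1
    ring
  case sφ => exact hasDerivAt_const _ _
  case cφ => exact hasDerivAt_const _ _
  case uu => exact hasDerivAt_const _ _
  case vv => exact hasDerivAt_const _ _
  case fθ =>
    refine (((((hds (p 1)).const_mul (p 4)).mul_const (Real.cos (p 2/2))).sub (((hdc (p 1)).const_mul (p 3)).mul_const (Real.sin (p 2/2)))).div_const 2).congr_deriv ?_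
    ring
  case fφ =>
    refine (((((hdc (p 1)).const_mul (p 4)).mul_const (Real.sin (p 2/2))).sub (((hds (p 1)).const_mul (p 3)).mul_const (Real.cos (p 2/2)))).div_const 2).congr_deriv ?_
    ring
  case g =>
    refine ((((((hdc (p 1)).const_mul (p 3)).mul_const (Real.cos (p 2/2))).add (((hds (p 1)).const_mul (p 4)).mul_const (Real.sin (p 2/2)))).neg).div_const 4).congr_deriv ?_
    ring
  case em =>
    refine (((((hds (p 1)).const_mul (p 3)).mul_const (Real.sin (p 2/2))).add (((hdc (p 1)).const_mul (p 4)).mul_const (Real.cos (p 2/2))))).congr_deriv ?_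
    ring
  case msθ =>
    convert hds (p 1) using 1
    ring
  case mcθ =>
    convert hdc (p 1) using 1
    ring
  case msφ => exact hasDerivAt_const _ _
  case mcφ => exact hasDerivAt_const _ _

set_option maxHeartbeats 1000000 in
lemma atom_hasDeriv2 (a : Atm) (p : Pt) :
    HasDerivAt (fun y => Atm.eval a (Function.update p 2 y)) (evalL (dA 2 a) p) (p 2) := by
  cases a <;>
    simp only [Atm.eval, Function.update_apply, Fin.reduceEq, reduceIte, if_true, if_pos rfl,
      evalL, dA, prodA, List.map_cons, List.map_nil, List.prod_cons, List.prod_nil,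
      List.sum_cons, List.sum_nil, add_zero, mul_one]
  case s => exact hasDerivAt_const _ _
  case ch => exact hasDerivAt_const _ _
  case sθ => exact hasDerivAt_const _ _
  case cθ => exact hasDerivAt_const _ _
  case sφ =>
    convert hds (p 2) using 1
    ring
  case cφ =>
    convert hdc (p 2) using 1
    ring
  case uu => exact hasDerivAt_const _ _
  case vv => exact hasDerivAt_const _ _
  case fθ =>
    refine (((((hdc (p 2)).const_mul (p 4 * Real.sin (p 1/2))).sub ((hds (p 2)).const_mul (p 3 * Real.cos (p 1/2)))).div_const 2)).congr_deriv ?_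
    ring
  case fφ =>
    refine (((((hds (p 2)).const_mul (p 4 * Real.cos (p 1/2))).sub ((hdc (p 2)).const_mul (p 3 * Real.sin (p 1/2)))).div_const 2)).congr_deriv ?_
    ring
  case g =>
    refine ((((((hdc (p 2)).const_mul (p 3 * Real.cos (p 1/2))).add ((hds (p 2)).const_mul (p 4 * Real.sin (p 1/2)))).neg).div_const 4)).congr_deriv ?_
    ring
  case em =>
    refine ((((hds (p 2)).const_mul (p 3 * Real.sin (p 1/2))).add ((hdc (p 2)).const_mul (p 4 * Real.cos (p 1/2))))).congr_deriv ?_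
    ring
  case msθ => exact hasDerivAt_const _ _
  case mcθ => exact hasDerivAt_const _ _
  case msφ =>
    convert hds (p 2) using 1
    ring
  case mcφ =>
    convert hdc (p 2) using 1
    ring

set_option maxHeartbeats 1000000 in
lemma atom_hasDeriv3 (a : Atm) (p : Pt) :
    HasDerivAt (fun y => Atm.eval a (Function.update p 3 y)) (evalL (dA 3 a) p) (p 3) := by
  cases a <;>
    simp only [Atm.eval, Function.update_apply, Fin.reduceEq, reduceIte, if_true, if_pos rfl,
      evalL, dA, prodA, List.map_cons, List.map_nil, List.prod_cons, List.prod_nil,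
      List.sum_cons, List.sum_nil, add_zero, mul_one]
  case s => exact hasDerivAt_const _ _
  case ch => exact hasDerivAt_const _ _
  case sθ => exact hasDerivAt_const _ _
  case cθ => exact hasDerivAt_const _ _
  case sφ => exact hasDerivAt_const _ _
  case cφ => exact hasDerivAt_const _ _
  case uu => exact hasDerivAt_id (p 3)
  case vv => exact hasDerivAt_const _ _
  case fθ =>
    refine ((((hasDerivAt_const (p 3) (p 4 * Real.sin (p 1/2) * Real.cos (p 2/2))).sub (((hasDerivAt_id (p 3)).mul_const (Real.cos (p 1/2))).mul_const (Real.sin (p 2/2)))).div_const 2)).congr_deriv ?_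
    ring
  case fφ =>
    refine ((((hasDerivAt_const (p 3) (p 4 * Real.cos (p 1/2) * Real.sin (p 2/2))).sub (((hasDerivAt_id (p 3)).mul_const (Real.sin (p 1/2))).mul_const (Real.cos (p 2/2)))).div_const 2)).congr_deriv ?_
    ring
  case g =>
    refine (((((((hasDerivAt_id (p 3)).mul_const (Real.cos (p 1/2))).mul_const (Real.cos (p 2/2))).add_const (p 4 * Real.sin (p 1/2) * Real.sin (p 2/2))).neg).div_const 4)).congr_deriv ?_
    ring
  case em =>
    refine (((((hasDerivAt_id (p 3)).mul_const (Real.sin (p 1/2))).mul_const (Real.sin (p 2/2))).add_const (p 4 * Real.cos (p 1/2) * Real.cos (p 2/2)))).congr_deriv ?_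
    ring
  case msθ => exact hasDerivAt_const _ _
  case mcθ => exact hasDerivAt_const _ _
  case msφ => exact hasDerivAt_const _ _
  case mcφ => exact hasDerivAt_const _ _

set_option maxHeartbeats 1000000 in
lemma atom_hasDeriv4 (a : Atm) (p : Pt) :
    HasDerivAt (fun y => Atm.eval a (Function.update p 4 y)) (evalL (dA 4 a) p) (p 4) := by
  cases a <;>
    simp only [Atm.eval, Function.update_apply, Fin.reduceEq, reduceIte, if_true, if_pos rfl,
      evalL, dA, prodA, List.map_cons, List.map_nil, List.prod_cons, List.prod_nil,
      List.sum_cons, List.sum_nil, add_zero, mul_one]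
  case s => exact hasDerivAt_const _ _
  case ch => exact hasDerivAt_const _ _
  case sθ => exact hasDerivAt_const _ _
  case cθ => exact hasDerivAt_const _ _
  case sφ => exact hasDerivAt_const _ _
  case cφ => exact hasDerivAt_const _ _
  case uu => exact hasDerivAt_const _ _
  case vv => exact hasDerivAt_id (p 4)
  case fθ =>
    refine ((((((hasDerivAt_id (p 4)).mul_const (Real.sin (p 1/2))).mul_const (Real.cos (p 2/2))).sub_const (p 3 * Real.cos (p 1/2) * Real.sin (p 2/2))).div_const 2)).congr_deriv ?_
    ring
  case fφ =>
    refine ((((((hasDerivAt_id (p 4)).mul_const (Real.cos (p 1/2))).mul_const (Real.sin (p 2/2))).sub_const (p 3 * Real.sin (p 1/2) * Real.cos (p 2/2))).div_const 2)).congr_deriv ?_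
    ring
  case g =>
    refine (((((hasDerivAt_const (p 4) (p 3 * Real.cos (p 1/2) * Real.cos (p 2/2))).add (((hasDerivAt_id (p 4)).mul_const (Real.sin (p 1/2))).mul_const (Real.sin (p 2/2)))).neg).div_const 4)).congr_deriv ?_
    ring
  case em =>
    refine (((hasDerivAt_const (p 4) (p 3 * Real.sin (p 1/2) * Real.sin (p 2/2))).add (((hasDerivAt_id (p 4)).mul_const (Real.cos (p 1/2))).mul_const (Real.cos (p 2/2))))).congr_deriv ?_
    ring
  case msθ => exact hasDerivAt_const _ _
  case mcθ => exact hasDerivAt_const _ _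
  case msφ => exact hasDerivAt_const _ _
  case mcφ => exact hasDerivAt_const _ _


lemma atom_hasDeriv (a : Atm) (i : Fin 5) (p : Pt) :
    HasDerivAt (fun y => Atm.eval a (Function.update p i y)) (evalL (dA i a) p) (p i) := by
  fin_cases i
  · exact atom_hasDeriv0 a p
  · exact atom_hasDeriv1 a p
  · exact atom_hasDeriv2 a p
  · exact atom_hasDeriv3 a p
  · exact atom_hasDeriv4 a p

noncomputable def Q (p : Pt) : ℝ := Real.cosh (p 0 / 2) - 1 + qf (p 1) (p 2) (p 3) (p 4)

private lemma QD0 (p : Pt) :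
    HasDerivAt (fun y => Q (Function.update p 0 y)) (evalL (Qd 0) p) (p 0) := by
  simp only [Q, qf, Function.update_apply, Fin.reduceEq, reduceIte, if_true, if_pos rfl,
    evalL, Qd, prodA, List.map_cons, List.map_nil, List.prod_cons, List.prod_nil,
    List.sum_cons, List.sum_nil, add_zero, mul_one, Atm.eval]
  refine (((hdch (p 0)).sub_const 1).add_const
    (1 - p 3 * Real.sin (p 1/2) * Real.sin (p 2/2) - p 4 * Real.cos (p 1/2) * Real.cos (p 2/2))).congr_deriv ?_
  ring

private lemma QD1 (p : Pt) :
    HasDerivAt (fun y => Q (Function.update p 1 y)) (evalL (Qd 1) p) (p 1) := by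
  simp only [Q, qf, Function.update_apply, Fin.reduceEq, reduceIte, if_true, if_pos rfl,
    evalL, Qd, prodA, List.map_cons, List.map_nil, List.prod_cons, List.prod_nil,
    List.sum_cons, List.sum_nil, add_zero, mul_one, Atm.eval]
  refine ((hasDerivAt_const (p 1) (Real.cosh (p 0/2) - 1)).add
    (((hasDerivAt_const (p 1) (1:ℝ)).sub
        (((hds (p 1)).const_mul (p 3)).mul_const (Real.sin (p 2/2)))).sub
      (((hdc (p 1)).const_mul (p 4)).mul_const (Real.cos (p 2/2))))).congr_deriv ?_
  ring

private lemma QD2 (p : Pt) :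
    HasDerivAt (fun y => Q (Function.update p 2 y)) (evalL (Qd 2) p) (p 2) := by
  simp only [Q, qf, Function.update_apply, Fin.reduceEq, reduceIte, if_true, if_pos rfl,
    evalL, Qd, prodA, List.map_cons, List.map_nil, List.prod_cons, List.prod_nil,
    List.sum_cons, List.sum_nil, add_zero, mul_one, Atm.eval]
  refine ((hasDerivAt_const (p 2) (Real.cosh (p 0/2) - 1)).add
    (((hasDerivAt_const (p 2) (1:ℝ)).sub
        ((hds (p 2)).const_mul (p 3 * Real.sin (p 1/2)))).sub
      ((hdc (p 2)).const_mul (p 4 * Real.cos (p 1/2))))).congr_deriv ?_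
  ring

private lemma QD3 (p : Pt) :
    HasDerivAt (fun y => Q (Function.update p 3 y)) (evalL (Qd 3) p) (p 3) := by
  simp only [Q, qf, Function.update_apply, Fin.reduceEq, reduceIte, if_true, if_pos rfl,
    evalL, Qd, prodA, List.map_cons, List.map_nil, List.prod_cons, List.prod_nil,
    List.sum_cons, List.sum_nil, add_zero, mul_one, Atm.eval]
  refine ((hasDerivAt_const (p 3) (Real.cosh (p 0/2) - 1)).add
    ((((hasDerivAt_const (p 3) (1:ℝ)).sub
        (((hasDerivAt_id (p 3)).mul_const (Real.sin (p 1/2))).mul_const (Real.sin (p 2/2)))).sub_const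
      (p 4 * Real.cos (p 1/2) * Real.cos (p 2/2))))).congr_deriv ?_
  ring

private lemma QD4 (p : Pt) :
    HasDerivAt (fun y => Q (Function.update p 4 y)) (evalL (Qd 4) p) (p 4) := by
  simp only [Q, qf, Function.update_apply, Fin.reduceEq, reduceIte, if_true, if_pos rfl,
    evalL, Qd, prodA, List.map_cons, List.map_nil, List.prod_cons, List.prod_nil,
    List.sum_cons, List.sum_nil, add_zero, mul_one, Atm.eval]
  refine ((hasDerivAt_const (p 4) (Real.cosh (p 0/2) - 1)).add
    ((((hasDerivAt_const (p 4) (1:ℝ)).sub_const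
        (p 3 * Real.sin (p 1/2) * Real.sin (p 2/2))).sub
      (((hasDerivAt_id (p 4)).mul_const (Real.cos (p 1/2))).mul_const (Real.cos (p 2/2)))))).congr_deriv ?_
  ring

lemma Q_hasDeriv (i : Fin 5) (p : Pt) :
    HasDerivAt (fun y => Q (Function.update p i y)) (evalL (Qd i) p) (p i) := by
  fin_cases i
  · exact QD0 p
  · exact QD1 p
  · exact QD2 p
  · exact QD3 p
  · exact QD4 p

@[simp] lemma prodA_nil (p : Pt) : prodA [] p = 1 := rfl
@[simp] lemma prodA_cons (a : Atm) (L : List Atm) (p : Pt) :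
    prodA (a :: L) p = Atm.eval a p * prodA L p := by simp [prodA]
@[simp] lemma prodA_append (L1 L2 : List Atm) (p : Pt) :
    prodA (L1 ++ L2) p = prodA L1 p * prodA L2 p := by simp [prodA]
@[simp] lemma evalL_nil (p : Pt) : evalL [] p = 0 := rfl
@[simp] lemma evalL_cons (cl : ℝ × List Atm) (T : List (ℝ × List Atm)) (p : Pt) :
    evalL (cl :: T) p = cl.1 * prodA cl.2 p + evalL T p := by simp [evalL]
@[simp] lemma evalL_append (T1 T2 : List (ℝ × List Atm)) (p : Pt) :
    evalL (T1 ++ T2) p = evalL T1 p + evalL T2 p := by simp [evalL]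

lemma evalL_mapR (T : List (ℝ × List Atm)) (L : List Atm) (p : Pt) :
    evalL (T.map fun cl => (cl.1, cl.2 ++ L)) p = evalL T p * prodA L p := by
  induction T with
  | nil => simp
  | cons hd tl ih => simp [ih]; ring

lemma evalL_mapCons (a : Atm) (T : List (ℝ × List Atm)) (p : Pt) :
    evalL (T.map fun cl => (cl.1, a :: cl.2)) p = Atm.eval a p * evalL T p := by
  induction T with
  | nil => simp
  | cons hd tl ih => simp [ih]; ring

noncomputable def dList (i : Fin 5) : List Atm → List (ℝ × List Atm)
  | [] => []
  | a :: L => ((dA i a).map (fun cl => (cl.1, cl.2 ++ L))) ++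
      ((dList i L).map (fun cl => (cl.1, a :: cl.2)))

lemma list_hasDeriv (i : Fin 5) (p : Pt) (L : List Atm) :
    HasDerivAt (fun y => prodA L (Function.update p i y)) (evalL (dList i L) p) (p i) := by
  induction L with
  | nil => simpa [dList] using hasDerivAt_const (p i) (1:ℝ)
  | cons a L ih =>
    have h := (atom_hasDeriv a i p).mul ih
    simp only [Function.update_eq_self] at h
    have : (fun y => prodA (a :: L) (Function.update p i y)) =
        fun y => Atm.eval a (Function.update p i y) * prodA L (Function.update p i y) := by
      funext y; simp
    rw [this]
    refine h.congr_deriv ?_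
    simp [dList, evalL_mapR, evalL_mapCons]
    try ring

structure Mono where
  c : ℝ
  L : List Atm
  j : ℕ

noncomputable def evalM (l : ℝ) (m : Mono) (p : Pt) : ℝ :=
  m.c * prodA m.L p * Q p ^ (-(l + (m.j : ℝ)))

noncomputable def dMono (l : ℝ) (i : Fin 5) (m : Mono) : List Mono :=
  ((dList i m.L).map (fun cl => Mono.mk (m.c * cl.1) cl.2 m.j)) ++
    ((Qd i).map (fun cl => Mono.mk (m.c * (-(l + (m.j : ℝ))) * cl.1) (m.L ++ cl.2) (m.j + 1)))

noncomputable def dE (l : ℝ) (i : Fin 5) (E : List Mono) : List Mono := E.flatMap (dMono l i)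

noncomputable def evalE (l : ℝ) (E : List Mono) (p : Pt) : ℝ := (E.map (evalM l · p)).sum

@[simp] lemma evalE_nil (l : ℝ) (p : Pt) : evalE l [] p = 0 := rfl
@[simp] lemma evalE_cons (l : ℝ) (m : Mono) (E : List Mono) (p : Pt) :
    evalE l (m :: E) p = evalM l m p + evalE l E p := by simp [evalE]
@[simp] lemma evalE_append (l : ℝ) (E1 E2 : List Mono) (p : Pt) :
    evalE l (E1 ++ E2) p = evalE l E1 p + evalE l E2 p := by simp [evalE]

lemma evalE_mapMono (l c : ℝ) (j : ℕ) (T : List (ℝ × List Atm)) (p : Pt) :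
    evalE l (T.map fun cl => Mono.mk (c * cl.1) cl.2 j) p
      = c * evalL T p * Q p ^ (-(l + (j:ℝ))) := by
  induction T with
  | nil => simp
  | cons hd tl ih => simp [ih, evalM]; ring

lemma evalE_mapChain (l c : ℝ) (L : List Atm) (j : ℕ) (T : List (ℝ × List Atm)) (p : Pt) :
    evalE l (T.map fun cl => Mono.mk (c * cl.1) (L ++ cl.2) j) p
      = c * prodA L p * evalL T p * Q p ^ (-(l + (j:ℝ))) := by
  induction T with
  | nil => simp
  | cons hd tl ih => simp [ih, evalM]; ring

lemma mono_hasDeriv (l : ℝ) (i : Fin 5) (m : Mono) (p : Pt) (hQ : 0 < Q p) :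
    HasDerivAt (fun y => evalM l m (Function.update p i y)) (evalE l (dMono l i m) p) (p i) := by
  have hQne : Q (Function.update p i (p i)) ≠ 0 := by
    rw [Function.update_eq_self]; exact hQ.ne'
  have hrp := (Q_hasDeriv i p).rpow_const (p := -(l + (m.j : ℝ))) (Or.inl hQne)
  have h := ((list_hasDeriv i p m.L).const_mul m.c).mul hrp
  simp only [Function.update_eq_self] at h
  have hfun : (fun y => evalM l m (Function.update p i y)) =
      fun y => m.c * prodA m.L (Function.update p i y) * Q (Function.update p i y) ^ (-(l + (m.j:ℝ))) := by
    funext y; rfl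
  rw [hfun]
  refine h.congr_deriv ?_
  simp only [dMono, evalE_append, evalE_mapMono, evalE_mapChain]
  have hcast : (-(l + ((m.j + 1 : ℕ) : ℝ))) = -(l + (m.j:ℝ)) - 1 := by push_cast; ring
  rw [hcast]
  ring

lemma expr_hasDeriv (l : ℝ) (i : Fin 5) (E : List Mono) (p : Pt) (hQ : 0 < Q p) :
    HasDerivAt (fun y => evalE l E (Function.update p i y)) (evalE l (dE l i E) p) (p i) := by
  induction E with
  | nil => simpa [dE] using hasDerivAt_const (p i) (0:ℝ)
  | cons m E ih =>
    have h := (mono_hasDeriv l i m p hQ).add ih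
    have hfun : (fun y => evalE l (m :: E) (Function.update p i y)) =
        fun y => evalM l m (Function.update p i y) + evalE l E (Function.update p i y) := by
      funext y; simp
    rw [hfun]
    refine h.congr_deriv ?_
    simp [dE]

lemma contQ : Continuous Q := by
  unfold Q qf
  continuity

lemma contUpd (i : Fin 5) (p : Pt) : Continuous (fun y : ℝ => Function.update p i y) := by
  apply continuous_pi; intro j
  by_cases h : j = i
  · subst h; simpa [Function.update_apply] using continuous_id'
  · simpa [Function.update_apply, h] using continuous_const

lemma iteratedDeriv_congr_nhds : ∀ (n : ℕ) {f g : ℝ → ℝ} {x : ℝ}, f =ᶠ[nhds x] g →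
    iteratedDeriv n f x = iteratedDeriv n g x := by
  intro n
  induction n with
  | zero => intro f g x h; simpa using h.eq_of_nhds
  | succ n ih =>
    intro f g x h
    rw [iteratedDeriv_succ, iteratedDeriv_succ]
    apply Filter.EventuallyEq.deriv_eq
    exact ((eventually_eventually_nhds.mpr h)).mono fun y hy => ih hy

lemma ev_mem (i : Fin 5) (p : Pt) (hp : 0 < Q p) :
    ∀ᶠ y in nhds (p i), 0 < Q (Function.update p i y) := by
  have hopen : IsOpen {y : ℝ | 0 < Q (Function.update p i y)} :=
    isOpen_lt continuous_const (contQ.comp (contUpd i p))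
  refine hopen.mem_nhds ?_
  show 0 < Q (Function.update p i (p i))
  rwa [Function.update_eq_self]

lemma iter_eval (l : ℝ) (i : Fin 5) (E : List Mono) (n : ℕ) : ∀ p : Pt, 0 < Q p →
    iteratedDeriv n (fun y => evalE l E (Function.update p i y)) (p i)
      = evalE l ((dE l i)^[n] E) p := by
  induction n with
  | zero => intro p _; simp [Function.update_eq_self]
  | succ n ih =>
    intro p hp
    rw [iteratedDeriv_succ]
    have hev : (iteratedDeriv n fun y => evalE l E (Function.update p i y)) =ᶠ[nhds (p i)]
        (fun y => evalE l ((dE l i)^[n] E) (Function.update p i y)) := by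
      refine (ev_mem i p hp).mono fun y hy => ?_
      have := ih (Function.update p i y) hy
      simpa [Function.update_idem] using this
    rw [hev.deriv_eq, (expr_hasDeriv l i ((dE l i)^[n] E) p hp).deriv,
      Function.iterate_succ_apply']

lemma level (l : ℝ) (i : Fin 5) (F : Pt → ℝ) (E : List Mono)
    (H : ∀ p : Pt, 0 < Q p → F p = evalE l E p) (n : ℕ) :
    ∀ p : Pt, 0 < Q p → iteratedDeriv n (fun y => F (Function.update p i y)) (p i)
      = evalE l ((dE l i)^[n] E) p := by
  intro p hp
  have hev : (fun y => F (Function.update p i y)) =ᶠ[nhds (p i)]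
      (fun y => evalE l E (Function.update p i y)) :=
    (ev_mem i p hp).mono fun y hy => H _ hy
  rw [iteratedDeriv_congr_nhds n hev, iter_eval l i E n p hp]

noncomputable def E0 : List Mono := [⟨1, [.s], 0⟩]
noncomputable def Efin (l : ℝ) (K R L N M : ℕ) : List Mono :=
  (dE l 3)^[K] ((dE l 4)^[R] ((dE l 2)^[L] ((dE l 1)^[N] ((dE l 0)^[M] E0))))

lemma base_eq (l : ℝ) : ∀ p : Pt, 0 < Q p →
    Psil l (p 0) (p 1) (p 2) (p 3) (p 4) = evalE l E0 p := by
  intro p hp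
  have hQ : (Real.cosh (p 0 / 2) - 1 + qf (p 1) (p 2) (p 3) (p 4)) = Q p := rfl
  simp only [Psil, E0, evalE, evalM, List.map_cons, List.map_nil, List.sum_cons, List.sum_nil,
    prodA_cons, prodA_nil, Atm.eval, hQ]
  rw [show (-(l + ((0:ℕ):ℝ))) = -l by norm_num, Real.rpow_neg hp.le]
  ring

theorem PsilD_eq (l : ℝ) (K R L N M : ℕ) (p : Pt) (hp : 0 < Q p) :
    PsilD l K R L N M (p 0) (p 1) (p 2) (p 3) (p 4) = evalE l (Efin l K R L N M) p := by
  have h1 := level l 0 (fun p => Psil l (p 0) (p 1) (p 2) (p 3) (p 4)) E0 (base_eq l) M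
  set E1 := (dE l 0)^[M] E0 with hE1
  have h1' : ∀ p : Pt, 0 < Q p →
      iteratedDeriv M (fun t' => Psil l t' (p 1) (p 2) (p 3) (p 4)) (p 0) = evalE l E1 p := by
    intro p hp
    have := h1 p hp
    have hfun : (fun y => Psil l (Function.update p 0 y 0) (Function.update p 0 y 1)
        (Function.update p 0 y 2) (Function.update p 0 y 3) (Function.update p 0 y 4)) =
        fun t' => Psil l t' (p 1) (p 2) (p 3) (p 4) := by
      funext y
      simp [Function.update_apply]
    rwa [hfun] at this
  have h2 := level l 1 _ E1 h1' N
  set E2 := (dE l 1)^[N] E1 with hE2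
  have h2' : ∀ p : Pt, 0 < Q p →
      iteratedDeriv N (fun θ' => iteratedDeriv M
        (fun t' => Psil l t' θ' (p 2) (p 3) (p 4)) (p 0)) (p 1) = evalE l E2 p := by
    intro p hp
    have := h2 p hp
    have hfun : (fun y => iteratedDeriv M (fun t' => Psil l t' (Function.update p 1 y 1)
        (Function.update p 1 y 2) (Function.update p 1 y 3) (Function.update p 1 y 4))
          (Function.update p 1 y 0)) =
        fun θ' => iteratedDeriv M (fun t' => Psil l t' θ' (p 2) (p 3) (p 4)) (p 0) := by
      funext y
      simp [Function.update_apply]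
    rwa [hfun] at this
  have h3 := level l 2 _ E2 h2' L
  set E3 := (dE l 2)^[L] E2 with hE3
  have h3' : ∀ p : Pt, 0 < Q p →
      iteratedDeriv L (fun φ' => iteratedDeriv N (fun θ' => iteratedDeriv M
        (fun t' => Psil l t' θ' φ' (p 3) (p 4)) (p 0)) (p 1)) (p 2) = evalE l E3 p := by
    intro p hp
    have := h3 p hp
    have hfun : (fun y => iteratedDeriv N (fun θ' => iteratedDeriv M
        (fun t' => Psil l t' θ' (Function.update p 2 y 2) (Function.update p 2 y 3)
          (Function.update p 2 y 4)) (Function.update p 2 y 0)) (Function.update p 2 y 1)) =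
        fun φ' => iteratedDeriv N (fun θ' => iteratedDeriv M
          (fun t' => Psil l t' θ' φ' (p 3) (p 4)) (p 0)) (p 1) := by
      funext y
      simp [Function.update_apply]
    rwa [hfun] at this
  have h4 := level l 4 _ E3 h3' R
  set E4 := (dE l 4)^[R] E3 with hE4
  have h4' : ∀ p : Pt, 0 < Q p →
      iteratedDeriv R (fun v' => iteratedDeriv L (fun φ' => iteratedDeriv N
        (fun θ' => iteratedDeriv M (fun t' => Psil l t' θ' φ' (p 3) v') (p 0)) (p 1)) (p 2)) (p 4)
        = evalE l E4 p := by
    intro p hp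
    have := h4 p hp
    have hfun : (fun y => iteratedDeriv L (fun φ' => iteratedDeriv N (fun θ' => iteratedDeriv M
        (fun t' => Psil l t' θ' φ' (Function.update p 4 y 3) (Function.update p 4 y 4))
        (Function.update p 4 y 0)) (Function.update p 4 y 1)) (Function.update p 4 y 2)) =
        fun v' => iteratedDeriv L (fun φ' => iteratedDeriv N
          (fun θ' => iteratedDeriv M (fun t' => Psil l t' θ' φ' (p 3) v') (p 0)) (p 1)) (p 2) := by
      funext y
      simp [Function.update_apply]
    rwa [hfun] at this
  have h5 := level l 3 _ E4 h4' K
  have := h5 p hp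
  have hfun : (fun y => iteratedDeriv R (fun v' => iteratedDeriv L (fun φ' => iteratedDeriv N
      (fun θ' => iteratedDeriv M (fun t' => Psil l t' θ' φ' (Function.update p 3 y 3) v')
      (Function.update p 3 y 0)) (Function.update p 3 y 1)) (Function.update p 3 y 2))
      (Function.update p 3 y 4)) =
      fun u' => iteratedDeriv R (fun v' => iteratedDeriv L (fun φ' => iteratedDeriv N
        (fun θ' => iteratedDeriv M (fun t' => Psil l t' θ' φ' u' v') (p 0)) (p 1)) (p 2)) (p 4) := by
    funext y
    simp [Function.update_apply]
  rw [hfun] at this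
  exact this

/-! ### Estimates -/

def Dom (p : Pt) : Prop :=
  0 < p 0 ∧ p 0 ≤ 1 ∧ 0 ≤ p 1 ∧ p 1 ≤ π ∧ 0 ≤ p 2 ∧ p 2 ≤ π ∧
    -1 ≤ p 3 ∧ p 3 ≤ 1 ∧ -1 ≤ p 4 ∧ p 4 ≤ 1

noncomputable def X (p : Pt) : ℝ := (p 0)^2 + qf (p 1) (p 2) (p 3) (p 4)
noncomputable def Sσ (p : Pt) : ℝ := Real.sin (p 1/2) + Real.sin (p 2/2)
noncomputable def Sc (p : Pt) : ℝ := Real.cos (p 1/2) + Real.cos (p 2/2)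

lemma dom_trig1 (p : Pt) (hD : Dom p) :
    0 ≤ Real.sin (p 1/2) ∧ Real.sin (p 1/2) ≤ 1 ∧ 0 ≤ Real.cos (p 1/2) ∧ Real.cos (p 1/2) ≤ 1 := by
  obtain ⟨_, _, h1, h2, _⟩ := hD
  have hpi := Real.pi_pos
  exact ⟨Real.sin_nonneg_of_nonneg_of_le_pi (by linarith) (by linarith),
    Real.sin_le_one _, Real.cos_nonneg_of_mem_Icc ⟨by linarith, by linarith⟩, Real.cos_le_one _⟩

lemma dom_trig2 (p : Pt) (hD : Dom p) :
    0 ≤ Real.sin (p 2/2) ∧ Real.sin (p 2/2) ≤ 1 ∧ 0 ≤ Real.cos (p 2/2) ∧ Real.cos (p 2/2) ≤ 1 := by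
  obtain ⟨_, _, _, _, h1, h2, _⟩ := hD
  have hpi := Real.pi_pos
  exact ⟨Real.sin_nonneg_of_nonneg_of_le_pi (by linarith) (by linarith),
    Real.sin_le_one _, Real.cos_nonneg_of_mem_Icc ⟨by linarith, by linarith⟩, Real.cos_le_one _⟩

lemma q_nonneg (p : Pt) (hD : Dom p) : 0 ≤ qf (p 1) (p 2) (p 3) (p 4) := by
  obtain ⟨ha, ha1, hb, hb1⟩ := dom_trig1 p hD
  obtain ⟨ha', ha1', hb', hb1'⟩ := dom_trig2 p hD
  obtain ⟨_, _, _, _, _, _, hu1, hu2, hv1, hv2⟩ := hD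
  have hs1 := Real.sin_sq_add_cos_sq (p 1/2)
  have hs2 := Real.sin_sq_add_cos_sq (p 2/2)
  have hcs := Real.cos_sub (p 1/2) (p 2/2)
  have hc1 := Real.cos_le_one (p 1/2 - p 2/2)
  have hc2 := Real.neg_one_le_cos (p 1/2 - p 2/2)
  unfold qf
  nlinarith [mul_nonneg ha ha', mul_nonneg hb hb']

lemma q_le_two (p : Pt) (hD : Dom p) : qf (p 1) (p 2) (p 3) (p 4) ≤ 2 := by
  obtain ⟨ha, ha1, hb, hb1⟩ := dom_trig1 p hD
  obtain ⟨ha', ha1', hb', hb1'⟩ := dom_trig2 p hD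
  obtain ⟨_, _, _, _, _, _, hu1, hu2, hv1, hv2⟩ := hD
  have hs1 := Real.sin_sq_add_cos_sq (p 1/2)
  have hs2 := Real.sin_sq_add_cos_sq (p 2/2)
  have hcs := Real.cos_sub (p 1/2) (p 2/2)
  have hc1 := Real.cos_le_one (p 1/2 - p 2/2)
  have hc2 := Real.neg_one_le_cos (p 1/2 - p 2/2)
  unfold qf
  nlinarith [mul_nonneg ha ha', mul_nonneg hb hb']

lemma X_pos (p : Pt) (hD : Dom p) : 0 < X p := by
  have h1 := q_nonneg p hD
  have h2 := hD.1
  unfold X; nlinarith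

lemma X_le_three (p : Pt) (hD : Dom p) : X p ≤ 3 := by
  have h1 := q_le_two p hD
  have h2 := hD.1; have h3 := hD.2.1
  unfold X; nlinarith

lemma Q_le_X (p : Pt) (hD : Dom p) : Q p ≤ X p := by
  have h := cosh_half_sub_one_le (t := p 0) hD.1.le hD.2.1
  unfold Q X; linarith

lemma X_le_32Q (p : Pt) (hD : Dom p) : X p ≤ 32 * Q p := by
  have h := le_cosh_half_sub_one (t := p 0) hD.1.le
  have hq := q_nonneg p hD
  unfold Q X; nlinarith

lemma Q_pos' (p : Pt) (hD : Dom p) : 0 < Q p := by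
  have := X_pos p hD; have := X_le_32Q p hD; linarith

private lemma key_ineq (a b a' b' u v t q : ℝ)
    (hs1 : a^2 + b^2 = 1) (hs2 : a'^2 + b'^2 = 1)
    (hu1 : -1 ≤ u) (hu2 : u ≤ 1) (hv1 : -1 ≤ v) (hv2 : v ≤ 1)
    (hq : q = 1 - (u*a*a' + v*b*b')) :
    ((v*a*b' - u*b*a')/2)^2 ≤ t^2 + q := by
  have hid : (v*a*b' - u*b*a')^2 + (u*a*a' + v*b*b')^2
      = u^2*a'^2*(a^2+b^2) + v^2*b'^2*(a^2+b^2) := by ring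
  rw [hs1] at hid
  have key : (v*a*b' - u*b*a')^2 + (u*a*a' + v*b*b')^2 ≤ 1 := by
    nlinarith [mul_nonneg (show (0:ℝ) ≤ 1 - u^2 by nlinarith) (sq_nonneg a'),
      mul_nonneg (show (0:ℝ) ≤ 1 - v^2 by nlinarith) (sq_nonneg b')]
  nlinarith [sq_nonneg (1 - (u*a*a' + v*b*b')), sq_nonneg (v*a*b' - u*b*a'), sq_nonneg t]

lemma fθ_sq (p : Pt) (hD : Dom p) : (Atm.eval .fθ p)^2 ≤ X p := by
  obtain ⟨_, _, _, _, _, _, hu1, hu2, hv1, hv2⟩ := hD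
  have h := key_ineq (Real.sin (p 1/2)) (Real.cos (p 1/2)) (Real.sin (p 2/2)) (Real.cos (p 2/2))
    (p 3) (p 4) (p 0) (qf (p 1) (p 2) (p 3) (p 4))
    (Real.sin_sq_add_cos_sq _) (Real.sin_sq_add_cos_sq _) hu1 hu2 hv1 hv2
    (by unfold qf; ring)
  have he : Atm.eval .fθ p
      = (p 4 * Real.sin (p 1/2) * Real.cos (p 2/2) - p 3 * Real.cos (p 1/2) * Real.sin (p 2/2))/2 := by
    simp [Atm.eval]
  rw [he, show X p = (p 0)^2 + qf (p 1) (p 2) (p 3) (p 4) from rfl]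
  exact h

lemma fφ_sq (p : Pt) (hD : Dom p) : (Atm.eval .fφ p)^2 ≤ X p := by
  obtain ⟨_, _, _, _, _, _, hu1, hu2, hv1, hv2⟩ := hD
  have h := key_ineq (Real.sin (p 2/2)) (Real.cos (p 2/2)) (Real.sin (p 1/2)) (Real.cos (p 1/2))
    (p 3) (p 4) (p 0) (qf (p 1) (p 2) (p 3) (p 4))
    (Real.sin_sq_add_cos_sq _) (Real.sin_sq_add_cos_sq _) hu1 hu2 hv1 hv2
    (by unfold qf; ring)
  have he : Atm.eval .fφ p
      = (p 4 * Real.cos (p 1/2) * Real.sin (p 2/2) - p 3 * Real.sin (p 1/2) * Real.cos (p 2/2))/2 := by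
    simp [Atm.eval]
  rw [he, show X p = (p 0)^2 + qf (p 1) (p 2) (p 3) (p 4) from rfl]
  convert h using 2
  ring

lemma sinh_half_le_sqrtX (p : Pt) (hD : Dom p) :
    Real.sinh (p 0 / 2) ≤ Real.sqrt (X p) := by
  have h1 : Real.sinh (p 0/2) ≤ 2 * (p 0/2) := sinh_le_two_mul (by linarith [hD.1]) (by linarith [hD.2.1])
  have h2 : p 0 ≤ Real.sqrt (X p) := by
    rw [show X p = (p 0)^2 + qf (p 1) (p 2) (p 3) (p 4) from rfl]
    have := q_nonneg p hD
    have : p 0 = Real.sqrt ((p 0)^2) := by rw [Real.sqrt_sq hD.1.le]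
    nlinarith [Real.sqrt_le_sqrt (show (p 0)^2 ≤ (p 0)^2 + qf (p 1) (p 2) (p 3) (p 4) from by linarith [q_nonneg p hD]), this]
  linarith

def wA : Atm → ℕ | .s => 1 | .fθ => 1 | .fφ => 1 | _ => 0
def kA : Atm → ℕ | .msθ => 1 | .msφ => 1 | _ => 0
def rA : Atm → ℕ | .mcθ => 1 | .mcφ => 1 | _ => 0
def wL (L : List Atm) : ℕ := (L.map wA).sum
def kL (L : List Atm) : ℕ := (L.map kA).sum
def rL (L : List Atm) : ℕ := (L.map rA).sum

lemma Sσ_nonneg (p : Pt) (hD : Dom p) : 0 ≤ Sσ p := by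
  have h1 := (dom_trig1 p hD).1; have h2 := (dom_trig2 p hD).1
  unfold Sσ; linarith
lemma Sc_nonneg (p : Pt) (hD : Dom p) : 0 ≤ Sc p := by
  have h1 := (dom_trig1 p hD).2.2.1; have h2 := (dom_trig2 p hD).2.2.1
  unfold Sc; linarith
lemma Sσ_le_two (p : Pt) (hD : Dom p) : Sσ p ≤ 2 := by
  have h1 := (dom_trig1 p hD).2.1; have h2 := (dom_trig2 p hD).2.1
  unfold Sσ; linarith
lemma Sc_le_two (p : Pt) (hD : Dom p) : Sc p ≤ 2 := by
  have h1 := (dom_trig1 p hD).2.2.2; have h2 := (dom_trig2 p hD).2.2.2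
  unfold Sc; linarith

lemma atom_bound (a : Atm) (p : Pt) (hD : Dom p) :
    |Atm.eval a p| ≤ 2 * Sσ p ^ kA a * Sc p ^ rA a * X p ^ ((wA a : ℝ)/2) := by
  obtain ⟨ha, ha1, hb, hb1⟩ := dom_trig1 p hD
  obtain ⟨ha', ha1', hb', hb1'⟩ := dom_trig2 p hD
  have hX0 := X_pos p hD
  have hsq : X p ^ ((1:ℝ)/2) = Real.sqrt (X p) := (Real.sqrt_eq_rpow _).symm
  have hu1 := hD.2.2.2.2.2.2.1
  have hu2 := hD.2.2.2.2.2.2.2.1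
  have hv1 := hD.2.2.2.2.2.2.2.2.1
  have hv2 := hD.2.2.2.2.2.2.2.2.2
  have hsqnn : 0 ≤ Real.sqrt (X p) := Real.sqrt_nonneg _
  cases a
  case s =>
    simp only [Atm.eval, wA, kA, rA, pow_zero, mul_one, one_mul, Nat.cast_one, hsq]
    have h0 : 0 ≤ Real.sinh (p 0/2) := by
      have := self_le_sinh' (y := p 0/2) (by linarith [hD.1])
      linarith [hD.1]
    rw [abs_of_nonneg h0]
    have := sinh_half_le_sqrtX p hD
    linarith
  case fθ =>
    simp only [wA, kA, rA, pow_zero, mul_one, one_mul, Nat.cast_one, hsq]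
    have := Real.abs_le_sqrt (fθ_sq p hD)
    linarith
  case fφ =>
    simp only [wA, kA, rA, pow_zero, mul_one, one_mul, Nat.cast_one, hsq]
    have := Real.abs_le_sqrt (fφ_sq p hD)
    linarith
  case ch =>
    simp only [Atm.eval, wA, kA, rA, pow_zero, mul_one, one_mul, Nat.cast_zero, zero_div,
      Real.rpow_zero]
    rw [abs_of_nonneg (Real.cosh_pos _).le]
    exact cosh_le_two hD.1.le hD.2.1
  case msθ =>
    simp only [Atm.eval, wA, kA, rA, pow_zero, pow_one, mul_one, one_mul, Nat.cast_zero, zero_div,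
      Real.rpow_zero]
    rw [abs_of_nonneg ha]
    unfold Sσ; nlinarith
  case msφ =>
    simp only [Atm.eval, wA, kA, rA, pow_zero, pow_one, mul_one, one_mul, Nat.cast_zero, zero_div,
      Real.rpow_zero]
    rw [abs_of_nonneg ha']
    unfold Sσ; nlinarith
  case mcθ =>
    simp only [Atm.eval, wA, kA, rA, pow_zero, pow_one, mul_one, one_mul, Nat.cast_zero, zero_div,
      Real.rpow_zero]
    rw [abs_of_nonneg hb]
    unfold Sc; nlinarith
  case mcφ =>
    simp only [Atm.eval, wA, kA, rA, pow_zero, pow_one, mul_one, one_mul, Nat.cast_zero, zero_div,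
      Real.rpow_zero]
    rw [abs_of_nonneg hb']
    unfold Sc; nlinarith
  all_goals
    simp only [Atm.eval, wA, kA, rA, pow_zero, mul_one, one_mul, Nat.cast_zero, zero_div,
      Real.rpow_zero]
  case sθ => rw [abs_of_nonneg ha]; linarith
  case cθ => rw [abs_of_nonneg hb]; linarith
  case sφ => rw [abs_of_nonneg ha']; linarith
  case cφ => rw [abs_of_nonneg hb']; linarith
  case uu => rw [abs_le]; constructor <;> linarith
  case vv => rw [abs_le]; constructor <;> linarith
  case g => rw [abs_le]; constructor <;> nlinarith [mul_nonneg hb hb', mul_nonneg ha ha']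
  case em => rw [abs_le]; constructor <;> nlinarith [mul_nonneg hb hb', mul_nonneg ha ha']

lemma qpow_bound (l : ℝ) (j : ℕ) (p : Pt) (hD : Dom p) :
    Q p ^ (-(l + (j:ℝ))) ≤ max 1 ((32:ℝ) ^ (l + (j:ℝ))) * X p ^ (-(l + (j:ℝ))) := by
  have hX0 := X_pos p hD
  have hQ0 := Q_pos' p hD
  have hQX := Q_le_X p hD
  have hXQ := X_le_32Q p hD
  set e := -(l + (j:ℝ)) with he
  rcases le_or_gt 0 e with h | h
  · have h1 : Q p ^ e ≤ X p ^ e := Real.rpow_le_rpow hQ0.le hQX h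
    have h2 : (0:ℝ) ≤ X p ^ e := Real.rpow_nonneg hX0.le _
    calc Q p ^ e ≤ X p ^ e := h1
      _ = 1 * X p ^ e := (one_mul _).symm
      _ ≤ max 1 ((32:ℝ) ^ (l + (j:ℝ))) * X p ^ e := by
          apply mul_le_mul_of_nonneg_right (le_max_left _ _) h2
  · have hdiv : 0 < X p / 32 := by linarith
    have h1 : Q p ^ e ≤ (X p / 32) ^ e :=
      Real.rpow_le_rpow_of_nonpos hdiv (by linarith) h.le
    have h2 : (X p / 32) ^ e = X p ^ e * ((32:ℝ) ^ e)⁻¹ := by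
      rw [Real.div_rpow hX0.le (by norm_num)]
      ring
    have h3 : ((32:ℝ) ^ e)⁻¹ = (32:ℝ) ^ (-e) :=
      (Real.rpow_neg (by norm_num) e).symm
    have h4 : (32:ℝ) ^ (-e) ≤ max 1 ((32:ℝ) ^ (l + (j:ℝ))) := by
      rw [he, neg_neg]; exact le_max_right _ _
    have h5 : (0:ℝ) ≤ X p ^ e := Real.rpow_nonneg hX0.le _
    calc Q p ^ e ≤ X p ^ e * ((32:ℝ) ^ e)⁻¹ := by rw [← h2]; exact h1
      _ = (32:ℝ) ^ (-e) * X p ^ e := by rw [h3]; ring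
      _ ≤ max 1 ((32:ℝ) ^ (l + (j:ℝ))) * X p ^ e := mul_le_mul_of_nonneg_right h4 h5

lemma prod_bound (L : List Atm) (p : Pt) (hD : Dom p) :
    |prodA L p| ≤ 2^(L.length) * Sσ p ^ kL L * Sc p ^ rL L * X p ^ ((wL L : ℝ)/2) := by
  have hX0 := X_pos p hD
  have hSσ := Sσ_nonneg p hD
  have hSc := Sc_nonneg p hD
  induction L with
  | nil => simp [wL, kL, rL]
  | cons a L ih =>
    have h1 : |prodA (a :: L) p| = |Atm.eval a p| * |prodA L p| := by
      rw [prodA_cons, abs_mul]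
    have h2 := atom_bound a p hD
    have hexp : ((wL (a :: L) : ℝ))/2 = (wA a:ℝ)/2 + (wL L:ℝ)/2 := by
      simp [wL]; push_cast; ring
    have hkk : kL (a :: L) = kA a + kL L := by simp [kL]
    have hrr : rL (a :: L) = rA a + rL L := by simp [rL]
    rw [h1, hexp, hkk, hrr, Real.rpow_add hX0, pow_add, pow_add]
    have hb1 : (0:ℝ) ≤ 2 * Sσ p ^ kA a * Sc p ^ rA a * X p ^ ((wA a : ℝ)/2) := by
      have := Real.rpow_nonneg hX0.le ((wA a : ℝ)/2)
      positivity
    calc |Atm.eval a p| * |prodA L p|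
        ≤ (2 * Sσ p ^ kA a * Sc p ^ rA a * X p ^ ((wA a : ℝ)/2)) *
          (2^(L.length) * Sσ p ^ kL L * Sc p ^ rL L * X p ^ ((wL L : ℝ)/2)) :=
          mul_le_mul h2 ih (abs_nonneg _) hb1
      _ = 2^((a :: L).length) * (Sσ p ^ kA a * Sσ p ^ kL L) * (Sc p ^ rA a * Sc p ^ rL L) *
          (X p ^ ((wA a : ℝ)/2) * X p ^ ((wL L : ℝ)/2)) := by
          simp only [List.length_cons, pow_succ]; ring

noncomputable def CM (l : ℝ) (m : Mono) : ℝ :=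
  |m.c| * 2^(m.L.length) * max 1 ((32:ℝ) ^ (l + (m.j:ℝ)))

lemma CM_nonneg (l : ℝ) (m : Mono) : 0 ≤ CM l m := by
  unfold CM
  have : (0:ℝ) ≤ max 1 ((32:ℝ) ^ (l + (m.j:ℝ))) := le_max_of_le_left zero_le_one
  positivity

lemma mono_bound (l : ℝ) (m : Mono) (p : Pt) (hD : Dom p) :
    |evalM l m p| ≤ CM l m *
      (Sσ p ^ kL m.L * Sc p ^ rL m.L * X p ^ ((wL m.L : ℝ)/2 - (l + m.j))) := by
  have hX0 := X_pos p hD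
  have hQ0 := Q_pos' p hD
  have hSσ := Sσ_nonneg p hD
  have hSc := Sc_nonneg p hD
  have h1 : |evalM l m p| = |m.c| * |prodA m.L p| * Q p ^ (-(l + (m.j:ℝ))) := by
    unfold evalM
    rw [abs_mul, abs_mul, abs_of_nonneg (Real.rpow_nonneg hQ0.le _)]
  rw [h1]
  have h2 := prod_bound m.L p hD
  have h3 := qpow_bound l m.j p hD
  have hmax : (0:ℝ) ≤ max 1 ((32:ℝ) ^ (l + (m.j:ℝ))) := le_max_of_le_left zero_le_one
  have h4 : |m.c| * |prodA m.L p| * Q p ^ (-(l + (m.j:ℝ)))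
      ≤ |m.c| * (2^(m.L.length) * Sσ p ^ kL m.L * Sc p ^ rL m.L * X p ^ ((wL m.L : ℝ)/2)) *
        (max 1 ((32:ℝ) ^ (l + (m.j:ℝ))) * X p ^ (-(l + (m.j:ℝ)))) := by
    apply mul_le_mul
    · exact mul_le_mul_of_nonneg_left h2 (abs_nonneg _)
    · exact h3
    · exact Real.rpow_nonneg hQ0.le _
    · have := Real.rpow_nonneg hX0.le ((wL m.L : ℝ)/2)
      positivity
  have h5 : X p ^ ((wL m.L : ℝ)/2) * X p ^ (-(l + (m.j:ℝ)))
      = X p ^ ((wL m.L : ℝ)/2 - (l + m.j)) := by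
    rw [← Real.rpow_add hX0]; ring_nf
  calc |m.c| * |prodA m.L p| * Q p ^ (-(l + (m.j:ℝ))) ≤ _ := h4
    _ = CM l m * (Sσ p ^ kL m.L * Sc p ^ rL m.L *
        (X p ^ ((wL m.L : ℝ)/2) * X p ^ (-(l + (m.j:ℝ))))) := by unfold CM; ring
    _ = _ := by rw [h5]

def sLn (L : List Atm) : ℕ := wL L + kL L + rL L

@[simp] lemma kL_nil : kL [] = 0 := rfl
@[simp] lemma rL_nil : rL [] = 0 := rfl
@[simp] lemma wL_nil : wL [] = 0 := rfl
@[simp] lemma kL_cons (a : Atm) (L : List Atm) : kL (a :: L) = kA a + kL L := by simp [kL]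
@[simp] lemma rL_cons (a : Atm) (L : List Atm) : rL (a :: L) = rA a + rL L := by simp [rL]
@[simp] lemma wL_cons (a : Atm) (L : List Atm) : wL (a :: L) = wA a + wL L := by simp [wL]
@[simp] lemma kL_append (L1 L2 : List Atm) : kL (L1 ++ L2) = kL L1 + kL L2 := by simp [kL]
@[simp] lemma rL_append (L1 L2 : List Atm) : rL (L1 ++ L2) = rL L1 + rL L2 := by simp [rL]
@[simp] lemma wL_append (L1 L2 : List Atm) : wL (L1 ++ L2) = wL L1 + wL L2 := by simp [wL]

def δk (i : Fin 5) : ℕ := if i = 3 then 2 else 0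
def δr (i : Fin 5) : ℕ := if i = 4 then 2 else 0
def δs (i : Fin 5) : ℕ := if (i:ℕ) ≤ 2 then 1 else 0

lemma dA_inv (i : Fin 5) (a : Atm) : ∀ cl ∈ dA i a,
    kL cl.2 ≤ kA a + δk i ∧ rL cl.2 ≤ rA a + δr i ∧
    wA a + kA a + rA a ≤ wL cl.2 + kL cl.2 + rL cl.2 + δs i := by
  intro cl hcl
  fin_cases i <;> cases a <;>
    simp_all [dA, δk, δr, δs, kL, rL, wL, kA, rA, wA]

lemma Qd_inv (i : Fin 5) : ∀ cl ∈ Qd i,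
    kL cl.2 ≤ δk i ∧ rL cl.2 ≤ δr i ∧
    2 ≤ wL cl.2 + kL cl.2 + rL cl.2 + δs i := by
  intro cl hcl
  fin_cases i <;>
    simp_all [Qd, δk, δr, δs, kL, rL, wL, kA, rA, wA]

lemma dList_inv (i : Fin 5) (L : List Atm) : ∀ cl ∈ dList i L,
    kL cl.2 ≤ kL L + δk i ∧ rL cl.2 ≤ rL L + δr i ∧
    wL L + kL L + rL L ≤ wL cl.2 + kL cl.2 + rL cl.2 + δs i := by
  induction L with
  | nil => intro cl hcl; simp [dList] at hcl
  | cons a L ih =>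
    intro cl hcl
    simp only [dList, List.mem_append, List.mem_map] at hcl
    rcases hcl with ⟨cl', hcl', rfl⟩ | ⟨cl', hcl', rfl⟩
    · have h := dA_inv i a cl' hcl'
      simp only [kL_append, rL_append, wL_append, kL_cons, rL_cons, wL_cons]
      omega
    · have h := ih cl' hcl'
      simp only [kL_append, rL_append, wL_append, kL_cons, rL_cons, wL_cons]
      omega

def kMc (m : Mono) : ℕ := kL m.L
def rMc (m : Mono) : ℕ := rL m.L
def sM (m : Mono) : ℤ := (wL m.L : ℤ) + kL m.L + rL m.L - 2 * m.j

def Inv (kcap rcap : ℕ) (n : ℤ) (m : Mono) : Prop :=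
  kMc m ≤ kcap ∧ rMc m ≤ rcap ∧ n ≤ sM m

lemma dMono_inv (l : ℝ) (i : Fin 5) (m : Mono) (kcap rcap : ℕ) (n : ℤ)
    (h : Inv kcap rcap n m) : ∀ m' ∈ dMono l i m,
    Inv (kcap + δk i) (rcap + δr i) (n - δs i) m' := by
  intro m' hm'
  obtain ⟨hk, hr, hs⟩ := h
  simp only [dMono, List.mem_append, List.mem_map] at hm'
  rcases hm' with ⟨cl, hcl, rfl⟩ | ⟨cl, hcl, rfl⟩
  · have hh := dList_inv i m.L cl hcl
    unfold Inv kMc rMc sM at *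
    simp only at *
    omega
  · have hh := Qd_inv i cl hcl
    unfold Inv kMc rMc sM at *
    simp only [kL_append, rL_append, wL_append] at *
    omega

lemma dE_inv (l : ℝ) (i : Fin 5) (E : List Mono) (kcap rcap : ℕ) (n : ℤ)
    (h : ∀ m ∈ E, Inv kcap rcap n m) : ∀ m' ∈ dE l i E,
    Inv (kcap + δk i) (rcap + δr i) (n - δs i) m' := by
  intro m' hm'
  simp only [dE, List.mem_flatMap] at hm'
  obtain ⟨m, hm, hm'⟩ := hm'
  exact dMono_inv l i m kcap rcap n (h m hm) m' hm'

lemma iter_inv_A (l : ℝ) (i : Fin 5) (hi : δk i = 0 ∧ δr i = 0 ∧ δs i = 1)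
    (kcap rcap : ℕ) (c : ℕ) :
    ∀ (E : List Mono) (n : ℤ), (∀ m ∈ E, Inv kcap rcap n m) →
      ∀ m' ∈ (dE l i)^[c] E, Inv kcap rcap (n - c) m' := by
  induction c with
  | zero => intro E n h m' hm'; simpa using h m' (by simpa using hm')
  | succ c ih =>
    intro E n h m' hm'
    rw [Function.iterate_succ_apply] at hm'
    have hstep := dE_inv l i E kcap rcap n h
    rw [hi.1, hi.2.1, hi.2.2] at hstep
    simp only [add_zero] at hstep
    have := ih (dE l i E) (n - 1) hstep m' hm'
    obtain ⟨h1, h2, h3⟩ := this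
    refine ⟨h1, h2, by push_cast at *; omega⟩

lemma iter_inv_B (l : ℝ) (kcap rcap : ℕ) (c : ℕ) :
    ∀ (E : List Mono) (n : ℤ), (∀ m ∈ E, Inv kcap rcap n m) →
      ∀ m' ∈ (dE l 3)^[c] E, Inv (kcap + 2*c) rcap n m' := by
  induction c generalizing kcap with
  | zero => intro E n h m' hm'; simpa using h m' (by simpa using hm')
  | succ c ih =>
    intro E n h m' hm'
    rw [Function.iterate_succ_apply] at hm'
    have hstep := dE_inv l 3 E kcap rcap n h
    have hk : δk (3 : Fin 5) = 2 := by decide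
    have hr : δr (3 : Fin 5) = 0 := by decide
    have hs : δs (3 : Fin 5) = 0 := by decide
    rw [hk, hr, hs] at hstep
    simp only [add_zero, Nat.cast_zero, sub_zero] at hstep
    have := ih (kcap + 2) (dE l 3 E) n hstep m' hm'
    obtain ⟨h1, h2, h3⟩ := this
    exact ⟨by omega, h2, h3⟩

lemma iter_inv_C (l : ℝ) (kcap rcap : ℕ) (c : ℕ) :
    ∀ (E : List Mono) (n : ℤ), (∀ m ∈ E, Inv kcap rcap n m) →
      ∀ m' ∈ (dE l 4)^[c] E, Inv kcap (rcap + 2*c) n m' := by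
  induction c generalizing rcap with
  | zero => intro E n h m' hm'; simpa using h m' (by simpa using hm')
  | succ c ih =>
    intro E n h m' hm'
    rw [Function.iterate_succ_apply] at hm'
    have hstep := dE_inv l 4 E kcap rcap n h
    have hk : δk (4 : Fin 5) = 0 := by decide
    have hr : δr (4 : Fin 5) = 2 := by decide
    have hs : δs (4 : Fin 5) = 0 := by decide
    rw [hk, hr, hs] at hstep
    simp only [add_zero, Nat.cast_zero, sub_zero] at hstep
    have := ih (rcap + 2) (dE l 4 E) n hstep m' hm'
    obtain ⟨h1, h2, h3⟩ := this
    exact ⟨h1, by omega, h3⟩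

lemma Efin_inv (l : ℝ) (K R L N M : ℕ) (hK : K ≤ 1) (hR : R ≤ 1) :
    ∀ m ∈ Efin l K R L N M, Inv (2*K) (2*R) (1 - (M + N + L : ℤ)) m := by
  have h0 : ∀ m ∈ E0, Inv 0 0 1 m := by
    intro m hm
    simp only [E0, List.mem_singleton] at hm
    subst hm
    refine ⟨by simp [Inv, kMc, kA, kL], by simp [Inv, rMc, rA, rL], ?_⟩
    simp [sM, kA, rA, wA, kL, rL, wL]
  have h1 := iter_inv_A l 0 (by decide) 0 0 M E0 1 h0
  have h2 := iter_inv_A l 1 (by decide) 0 0 N _ _ h1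
  have h3 := iter_inv_A l 2 (by decide) 0 0 L _ _ h2
  have h4 := iter_inv_C l 0 0 R _ _ h3
  have h5 := iter_inv_B l 0 (0 + 2*R) K _ _ h4
  intro m hm
  have := h5 m hm
  obtain ⟨hk, hr, hs⟩ := this
  refine ⟨by omega, by omega, by push_cast at hs ⊢; omega⟩

noncomputable def RHSsum (l : ℝ) (K R L N M : ℕ) (p : Pt) : ℝ :=
  ∑ k ∈ Finset.range 3, ∑ r ∈ Finset.range 3,
    Sσ p ^ (K * k) * Sc p ^ (R * r) *
      X p ^ (-(l + ((L : ℝ) + N + M - 1 + K * k + R * r) / 2))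

lemma RHSterm_nonneg (l : ℝ) (K R L N M : ℕ) (p : Pt) (hD : Dom p) (k r : ℕ) :
    0 ≤ Sσ p ^ (K * k) * Sc p ^ (R * r) *
      X p ^ (-(l + ((L : ℝ) + N + M - 1 + K * k + R * r) / 2)) := by
  have h1 := Sσ_nonneg p hD
  have h2 := Sc_nonneg p hD
  have h3 := (X_pos p hD).le
  have := Real.rpow_nonneg h3 (-(l + ((L : ℝ) + N + M - 1 + K * k + R * r) / 2))
  positivity

lemma RHSsum_nonneg (l : ℝ) (K R L N M : ℕ) (p : Pt) (hD : Dom p) :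
    0 ≤ RHSsum l K R L N M p := by
  apply Finset.sum_nonneg
  intro k _
  exact Finset.sum_nonneg fun r _ => RHSterm_nonneg l K R L N M p hD k r

lemma term_le_RHSsum (l : ℝ) (K R L N M : ℕ) (p : Pt) (hD : Dom p)
    (k0 r0 : ℕ) (hk0 : k0 < 3) (hr0 : r0 < 3) :
    Sσ p ^ (K * k0) * Sc p ^ (R * r0) *
      X p ^ (-(l + ((L : ℝ) + N + M - 1 + K * k0 + R * r0) / 2)) ≤ RHSsum l K R L N M p := by
  have h1 : Sσ p ^ (K * k0) * Sc p ^ (R * r0) *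
      X p ^ (-(l + ((L : ℝ) + N + M - 1 + K * k0 + R * r0) / 2)) ≤
      ∑ r ∈ Finset.range 3, Sσ p ^ (K * k0) * Sc p ^ (R * r) *
        X p ^ (-(l + ((L : ℝ) + N + M - 1 + K * k0 + R * r) / 2)) :=
    Finset.single_le_sum (fun r _ => RHSterm_nonneg l K R L N M p hD k0 r)
      (Finset.mem_range.mpr hr0)
  refine h1.trans ?_
  exact Finset.single_le_sum
    (fun k _ => Finset.sum_nonneg fun r _ => RHSterm_nonneg l K R L N M p hD k r)
    (Finset.mem_range.mpr hk0)

lemma pow_transfer (x a b : ℝ) (hx0 : 0 < x) (hx3 : x ≤ 3) (hab : b ≤ a) :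
    x ^ a ≤ 3 ^ (a - b) * x ^ b := by
  have h1 : x ^ a = x ^ (a - b) * x ^ b := by
    rw [← Real.rpow_add hx0]; ring_nf
  rw [h1]
  apply mul_le_mul_of_nonneg_right _ (Real.rpow_nonneg hx0.le _)
  exact Real.rpow_le_rpow hx0.le hx3 (by linarith)

lemma mono_final (l : ℝ) (K R L N M : ℕ) (hK : K ≤ 1) (hR : R ≤ 1) (m : Mono)
    (hm : Inv (2*K) (2*R) (1 - (M + N + L : ℤ)) m) (p : Pt) (hD : Dom p) :
    |evalM l m p| ≤
      (CM l m * 3 ^ (((wL m.L : ℝ)/2 - (l + m.j)) - (-(l + ((L : ℝ) + N + M - 1 + K * kMc m + R * rMc m) / 2))))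
        * RHSsum l K R L N M p := by
  obtain ⟨hk, hr, hs⟩ := hm
  have hX0 := X_pos p hD
  have hX3 := X_le_three p hD
  have hSσ := Sσ_nonneg p hD
  have hSc := Sc_nonneg p hD
  have hKk : K * kMc m = kMc m := by interval_cases K <;> omega
  have hRr : R * rMc m = rMc m := by interval_cases R <;> omega
  set a : ℝ := (wL m.L : ℝ)/2 - (l + m.j) with ha
  set b : ℝ := -(l + ((L : ℝ) + N + M - 1 + K * kMc m + R * rMc m) / 2) with hb
  have hab : b ≤ a := by
    have hKk' : (K:ℝ) * (kMc m : ℝ) = (kMc m : ℝ) := by exact_mod_cast hKk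
    have hRr' : (R:ℝ) * (rMc m : ℝ) = (rMc m : ℝ) := by exact_mod_cast hRr
    rw [ha, hb, hKk', hRr']
    unfold sM at hs
    have : (1 : ℝ) - (M + N + L : ℝ) ≤ (wL m.L : ℝ) + kMc m + rMc m - 2 * m.j := by
      exact_mod_cast hs
    unfold kMc rMc at *
    linarith
  have h1 := mono_bound l m p hD
  have h2 : X p ^ a ≤ 3 ^ (a - b) * X p ^ b := pow_transfer _ _ _ hX0 hX3 hab
  have h3 : Sσ p ^ kL m.L * Sc p ^ rL m.L * X p ^ a ≤
      3 ^ (a - b) * (Sσ p ^ kL m.L * Sc p ^ rL m.L * X p ^ b) := by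
    have hnn : (0:ℝ) ≤ Sσ p ^ kL m.L * Sc p ^ rL m.L := by positivity
    calc Sσ p ^ kL m.L * Sc p ^ rL m.L * X p ^ a
        ≤ Sσ p ^ kL m.L * Sc p ^ rL m.L * (3 ^ (a - b) * X p ^ b) :=
          mul_le_mul_of_nonneg_left h2 hnn
      _ = 3 ^ (a - b) * (Sσ p ^ kL m.L * Sc p ^ rL m.L * X p ^ b) := by ring
  have h4 : Sσ p ^ kL m.L * Sc p ^ rL m.L * X p ^ b ≤ RHSsum l K R L N M p := by
    have h5 := term_le_RHSsum l K R L N M p hD (kMc m) (rMc m) (by omega) (by omega)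
    rw [hKk, hRr] at h5
    simpa [kMc, rMc, hb] using h5
  have hCM := CM_nonneg l m
  have h3nn : (0:ℝ) ≤ (3:ℝ) ^ (a - b) := Real.rpow_nonneg (by norm_num) _
  calc |evalM l m p| ≤ CM l m * (Sσ p ^ kL m.L * Sc p ^ rL m.L * X p ^ a) := h1
    _ ≤ CM l m * (3 ^ (a - b) * RHSsum l K R L N M p) := by
        apply mul_le_mul_of_nonneg_left _ hCM
        calc Sσ p ^ kL m.L * Sc p ^ rL m.L * X p ^ a
            ≤ 3 ^ (a - b) * (Sσ p ^ kL m.L * Sc p ^ rL m.L * X p ^ b) := h3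
          _ ≤ 3 ^ (a - b) * RHSsum l K R L N M p := mul_le_mul_of_nonneg_left h4 h3nn
    _ = (CM l m * 3 ^ (a - b)) * RHSsum l K R L N M p := by ring

lemma expr_final (l : ℝ) (K R L N M : ℕ) (hK : K ≤ 1) (hR : R ≤ 1) :
    ∀ E : List Mono, (∀ m ∈ E, Inv (2*K) (2*R) (1 - (M + N + L : ℤ)) m) →
    ∃ C : ℝ, 0 < C ∧ ∀ p : Pt, Dom p → |evalE l E p| ≤ C * RHSsum l K R L N M p := by
  intro E
  induction E with
  | nil =>
    intro _
    exact ⟨1, one_pos, fun p hD => by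
      simpa using RHSsum_nonneg l K R L N M p hD⟩
  | cons m E ih =>
    intro h
    obtain ⟨C, hC, hCb⟩ := ih fun m' hm' => h m' (List.mem_cons_of_mem _ hm')
    set Cm := CM l m * 3 ^ (((wL m.L : ℝ)/2 - (l + m.j)) -
      (-(l + ((L : ℝ) + N + M - 1 + K * kMc m + R * rMc m) / 2))) with hCm
    have hCmnn : 0 ≤ Cm := by
      have := CM_nonneg l m
      have : (0:ℝ) ≤ (3:ℝ) ^ (((wL m.L : ℝ)/2 - (l + m.j)) -
        (-(l + ((L : ℝ) + N + M - 1 + K * kMc m + R * rMc m) / 2))) :=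
        Real.rpow_nonneg (by norm_num) _
      rw [hCm]
      exact mul_nonneg (CM_nonneg l m) this
    refine ⟨Cm + C, by linarith, fun p hD => ?_⟩
    have h1 : |evalE l (m :: E) p| ≤ |evalM l m p| + |evalE l E p| := by
      rw [evalE_cons]; exact abs_add_le _ _
    have h2 := mono_final l K R L N M hK hR m (h m List.mem_cons_self) p hD
    have h3 := hCb p hD
    calc |evalE l (m :: E) p| ≤ |evalM l m p| + |evalE l E p| := h1
      _ ≤ Cm * RHSsum l K R L N M p + C * RHSsum l K R L N M p := add_le_add h2 h3
      _ = (Cm + C) * RHSsum l K R L N M p := by ring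

theorem main_bound (l : ℝ) (M N K R L : ℕ) (hK : K ≤ 1) (hR : R ≤ 1) :
    ∃ C : ℝ, 0 < C ∧ ∀ p : Pt, Dom p →
      |PsilD l K R L N M (p 0) (p 1) (p 2) (p 3) (p 4)| ≤ C * RHSsum l K R L N M p := by
  obtain ⟨C, hC, hCb⟩ := expr_final l K R L N M hK hR (Efin l K R L N M)
    (Efin_inv l K R L N M hK hR)
  refine ⟨C, hC, fun p hD => ?_⟩
  rw [PsilD_eq l K R L N M p (Q_pos' p hD)]
  exact hCb p hD

end PsiAux

theorem psil_mixed_derivative_estimate (l : ℝ) (M N K R L : ℕ)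
    (hK : K ≤ 1) (hR : R ≤ 1) (hL : L ≤ 1) :
    ∃ C : ℝ, 0 < C ∧ ∀ t ∈ Ioc (0 : ℝ) 1, ∀ θ ∈ Icc (0 : ℝ) π, ∀ φ ∈ Icc (0 : ℝ) π,
      ∀ u ∈ Icc (-1 : ℝ) 1, ∀ v ∈ Icc (-1 : ℝ) 1,
      |PsilD l K R L N M t θ φ u v| ≤
        C * ∑ k ∈ Finset.range 3, ∑ r ∈ Finset.range 3,
          (Real.sin (θ/2) + Real.sin (φ/2)) ^ (K * k) *
          (Real.cos (θ/2) + Real.cos (φ/2)) ^ (R * r) *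
          (t ^ 2 + qf θ φ u v) ^
            (-(l + ((L : ℝ) + N + M - 1 + K * k + R * r) / 2)) := by
  obtain ⟨C, hC, hCb⟩ := PsiAux.main_bound l M N K R L hK hR
  refine ⟨C, hC, ?_⟩
  intro t ht θ hθ φ hφ u hu v hv
  set p : PsiAux.Pt := ![t, θ, φ, u, v] with hp
  have hp0 : p 0 = t := rfl
  have hp1 : p 1 = θ := rfl
  have hp2 : p 2 = φ := rfl
  have hp3 : p 3 = u := rfl
  have hp4 : p 4 = v := rfl
  have hD : PsiAux.Dom p := by
    unfold PsiAux.Dom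
    rw [hp0, hp1, hp2, hp3, hp4]
    exact ⟨ht.1, ht.2, hθ.1, hθ.2, hφ.1, hφ.2, hu.1, hu.2, hv.1, hv.2⟩
  have h := hCb p hD
  rw [hp0, hp1, hp2, hp3, hp4] at h
  have hR : PsiAux.RHSsum l K R L N M p =
      ∑ k ∈ Finset.range 3, ∑ r ∈ Finset.range 3,
        (Real.sin (θ/2) + Real.sin (φ/2)) ^ (K * k) *
        (Real.cos (θ/2) + Real.cos (φ/2)) ^ (R * r) *
        (t ^ 2 + qf θ φ u v) ^
          (-(l + ((L : ℝ) + N + M - 1 + K * k + R * r) / 2)) := by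
    unfold PsiAux.RHSsum PsiAux.Sσ PsiAux.Sc PsiAux.X
    rw [hp0, hp1, hp2, hp3, hp4]
  rw [hR] at h
  exact h
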